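/- Let A ∈ GL_N(ℚ̄) with det(A) = 1 or det(A) = −1, and let I_N be the N × N identity matrix. Then 𝓗(A + I_N) ≤ 2 𝓗(A) and 𝓗(A − I_N) ≤ 2 𝓗(A). -/

import Mathlib

open scoped BigOperators
open Matrix NumberField

noncomputable section

abbrev Qbar : Type := AlgebraicClosure ℚ

/-- The absolute (multiplicative) Weil height of a vector with entries in `Qbar`,
computed over the number field generated by its coordinates: the product of the
archimedean local factors `(∑ ‖x_i‖_v²)^{d_v/2}` and the non-archimedean part
(the inverse of the absolute norm of the fractional ideal generated by the
coordinates), all raised to the power `1/[K:ℚ]`. -/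
noncomputable def vecHeight {ι : Type} [Fintype ι] (x : ι → Qbar) : ℝ :=
  letI K := IntermediateField.adjoin ℚ (Set.range x)
  haveI : Finite (Set.range x) := Set.finite_range x
  haveI : FiniteDimensional ℚ K :=
    IntermediateField.finiteDimensional_adjoin fun a _ =>
      ((AlgebraicClosure.isAlgebraic ℚ).isAlgebraic a).isIntegral
  haveI : CharZero K := charZero_of_injective_algebraMap (algebraMap ℚ K).injective
  haveI : NumberField K := {}
  letI x' : ι → K := fun i => ⟨x i, IntermediateField.subset_adjoin ℚ _ ⟨i, rfl⟩⟩
  ((∏ w : InfinitePlace K, (∑ i, (w (x' i)) ^ 2) ^ ((w.mult : ℝ) / 2)) *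
      (((FractionalIdeal.absNorm
        (FractionalIdeal.spanFinset (𝓞 K) Finset.univ x') : ℚ) : ℝ))⁻¹) ^
    (((Module.finrank ℚ K : ℝ))⁻¹)

/-- The inhomogeneous height `h(x) = H(1,x)`. -/
noncomputable def vecHeight' {ι : Type} [Fintype ι] (x : ι → Qbar) : ℝ :=
  vecHeight (fun o : Option ι => o.elim 1 x)

/-- The height of an `N × J` matrix over `Qbar`: the height of the vector of its
`J × J` minors (Grassmann coordinates of its column span). -/
noncomputable def matHeight {N J : ℕ} (X : Matrix (Fin N) (Fin J) Qbar) : ℝ :=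
  vecHeight (fun s : {s : Finset (Fin N) // s.card = J} =>
    (X.submatrix (fun i => ((s.1.orderIsoOfFin s.2) i : Fin N)) id).det)

/-- The height of a subspace of `Qbar^N`: the height of the wedge product of a
basis, i.e. of the matrix whose columns form a basis. -/
noncomputable def subHeight {N : ℕ} (V : Submodule Qbar (Fin N → Qbar)) : ℝ :=
  matHeight (Matrix.of fun i j => ((Module.finBasis Qbar V) j : Fin N → Qbar) i)

/-- The height `𝓗` of a matrix viewed as a vector of its entries. -/
noncomputable def entHeight {N M : ℕ} (A : Matrix (Fin N) (Fin M) Qbar) : ℝ :=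
  vecHeight (fun p : Fin N × Fin M => A p.1 p.2)

/-- The symmetric bilinear form associated to the matrix `F`. -/
noncomputable def bilin {N : ℕ} (F : Matrix (Fin N) (Fin N) Qbar)
    (x y : Fin N → Qbar) : Qbar :=
  x ⬝ᵥ F.mulVec y

/-- The bilinear space `(Z,F)` is regular. -/
def RegularOn {N : ℕ} (F : Matrix (Fin N) (Fin N) Qbar)
    (Z : Submodule Qbar (Fin N → Qbar)) : Prop :=
  ∀ x ∈ Z, x ≠ 0 → ∃ y ∈ Z, bilin F x y ≠ 0

/-- A subspace is totally isotropic for `F`. -/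
def TotIsotropic {N : ℕ} (F : Matrix (Fin N) (Fin N) Qbar)
    (W : Submodule Qbar (Fin N → Qbar)) : Prop :=
  ∀ x ∈ W, ∀ y ∈ W, bilin F x y = 0

set_option synthInstance.maxHeartbeats 1000000
set_option maxHeartbeats 1000000
open scoped nonZeroDivisors ComplexOrder
set_option linter.unusedSectionVars false

section AuxIdeal
variable {K : Type*} [Field K] [NumberField K]
lemma prod_mem_pow_card {ι : Type*} (I : FractionalIdeal (𝓞 K)⁰ K) (s : Finset ι)
    (f : ι → K) (hf : ∀ i ∈ s, f i ∈ I) : (∏ i ∈ s, f i) ∈ I ^ s.card := by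
  classical
  induction s using Finset.cons_induction with
  | empty => simpa using FractionalIdeal.one_mem_one _
  | cons a s ha ih =>
      rw [Finset.prod_cons, Finset.card_cons, pow_succ, mul_comm (I ^ s.card) I]
      exact FractionalIdeal.mul_mem_mul (hf a (Finset.mem_cons_self a s))
        (ih fun i hi => hf i (Finset.mem_cons_of_mem hi))

lemma fi_pow_mem_pow {I : FractionalIdeal (𝓞 K)⁰ K} {z : K} (hz : z ∈ I) (n : ℕ) :
    z ^ n ∈ I ^ n := by
  rw [← FractionalIdeal.mem_coe, FractionalIdeal.coe_pow]
  exact Submodule.pow_mem_pow _ (FractionalIdeal.mem_coe.mpr hz) n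

lemma one_le_of_one_le_pow {I : FractionalIdeal (𝓞 K)⁰ K} {n : ℕ} (hn : n ≠ 0)
    (h : 1 ≤ I ^ n) : 1 ≤ I := by
  have hI : I ≠ 0 := by
    rintro rfl
    rw [zero_pow hn] at h
    have : (1:K) ∈ (0 : FractionalIdeal (𝓞 K)⁰ K) := h (FractionalIdeal.one_mem_one _)
    simp at this
  have hinv : I⁻¹ ≤ 1 := by
    intro z hz
    have hz' : z ∈ I⁻¹ := hz
    have h1 : (1 : K) ∈ I ^ n := h (FractionalIdeal.one_mem_one _)
    have hzn : z ^ n ∈ (1 : FractionalIdeal (𝓞 K)⁰ K) := by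
      have h2 : z ^ n * 1 ∈ (I⁻¹) ^ n * I ^ n :=
        FractionalIdeal.mul_mem_mul (fi_pow_mem_pow hz' n) h1
      rwa [mul_one, ← mul_pow, inv_mul_cancel₀ hI, one_pow] at h2
    rw [FractionalIdeal.mem_one_iff] at hzn
    obtain ⟨y, hy⟩ := hzn
    have hint : IsIntegral (𝓞 K) z := by
      refine ⟨Polynomial.X ^ n - Polynomial.C y, Polynomial.monic_X_pow_sub_C _ hn, ?_⟩
      simp [hy, sub_eq_zero]
    obtain ⟨y', hy'⟩ := IsIntegrallyClosed.isIntegral_iff.mp hint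
    exact (FractionalIdeal.mem_one_iff _).mpr ⟨y', hy'⟩
  calc (1 : FractionalIdeal (𝓞 K)⁰ K) = I * I⁻¹ := (mul_inv_cancel₀ hI).symm
    _ ≤ I * 1 := mul_le_mul_right hinv I
    _ = I := mul_one I

lemma absNorm_anti {I J : FractionalIdeal (𝓞 K)⁰ K} (hJ : J ≠ 0) (h : J ≤ I) :
    FractionalIdeal.absNorm I ≤ FractionalIdeal.absNorm J := by
  have hI : I ≠ 0 := fun h0 => hJ (le_antisymm (h0 ▸ h) (FractionalIdeal.zero_le J))
  have h1 : I⁻¹ * J ≤ 1 := by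
    calc I⁻¹ * J ≤ I⁻¹ * I := mul_le_mul_right h _
    _ = 1 := inv_mul_cancel₀ hI
  obtain ⟨a, ha⟩ := FractionalIdeal.le_one_iff_exists_coeIdeal.mp h1
  have hJ' : J = I * a := by
    rw [ha, ← mul_assoc, mul_inv_cancel₀ hI, one_mul]
  have ha0 : a ≠ ⊥ := by
    rintro rfl
    rw [FractionalIdeal.coeIdeal_bot, mul_zero] at hJ'
    exact hJ hJ'
  have h1a : 1 ≤ (Ideal.absNorm a : ℚ) := by
    exact_mod_cast Nat.one_le_iff_ne_zero.mpr (fun hh => ha0 (Ideal.absNorm_eq_zero_iff.mp hh))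
  rw [hJ', _root_.map_mul, FractionalIdeal.coeIdeal_absNorm]
  nlinarith [FractionalIdeal.absNorm_nonneg I]
end AuxIdeal

lemma frob_lower {N : ℕ} (hN : 0 < N) (B : Matrix (Fin N) (Fin N) ℂ)
    (hdet : ‖B.det‖ = 1) : (N : ℝ) ≤ ∑ p : Fin N × Fin N, ‖B p.1 p.2‖ ^ 2 := by
  classical
  have h : (Bᴴ * B).IsHermitian := Matrix.isHermitian_conjTranspose_mul_self B
  set lam := h.eigenvalues with hlam
  have hnn : ∀ i, 0 ≤ lam i := (Matrix.posSemidef_conjTranspose_mul_self B).eigenvalues_nonneg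
  have hprod : ∏ i, lam i = 1 := by
    have h1 : (Bᴴ * B).det = ∏ i, (lam i : ℂ) := h.det_eq_prod_eigenvalues
    have h2 : (Bᴴ * B).det = ((1 : ℝ) : ℂ) := by
      rw [Matrix.det_mul, Matrix.det_conjTranspose,
        show star B.det = (starRingEnd ℂ) B.det from rfl, mul_comm, Complex.mul_conj,
        Complex.normSq_eq_norm_sq, hdet, one_pow]
    rw [h2, ← Complex.ofReal_prod] at h1
    exact_mod_cast h1.symm
  have hT : (Bᴴ * B).trace = ∑ i, (lam i : ℂ) := by
    conv_lhs => rw [h.spectral_theorem]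
    rw [Unitary.conjStarAlgAut_apply, trace_mul_cycle,
      show (star (h.eigenvectorUnitary : Matrix (Fin N) (Fin N) ℂ)) *
        (h.eigenvectorUnitary : Matrix (Fin N) (Fin N) ℂ) = 1 from
          (Matrix.mem_unitaryGroup_iff').mp (h.eigenvectorUnitary).2,
      one_mul, Matrix.trace_diagonal]
    rfl
  have htrace : ((∑ p : Fin N × Fin N, ‖B p.1 p.2‖ ^ 2 : ℝ) : ℂ) = ∑ i, (lam i : ℂ) := by
    rw [← hT, Matrix.trace, Fintype.sum_prod_type]
    push_cast
    rw [Finset.sum_comm]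
    congr 1; ext j
    simp only [Matrix.diag_apply, Matrix.mul_apply, Matrix.conjTranspose_apply]
    congr 1; ext i
    rw [show star (B i j) = (starRingEnd ℂ) (B i j) from rfl, mul_comm, Complex.mul_conj,
      Complex.normSq_eq_norm_sq]
    norm_cast
  have htr : ∑ p : Fin N × Fin N, ‖B p.1 p.2‖ ^ 2 = ∑ i, lam i := by
    rw [← Complex.ofReal_sum] at htrace
    exact_mod_cast htrace
  rw [htr]
  have hNpos : (0:ℝ) < N := by exact_mod_cast hN
  have hw : ∑ _i : Fin N, (N : ℝ)⁻¹ = 1 := by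
    rw [Finset.sum_const, Finset.card_univ, Fintype.card_fin, nsmul_eq_mul,
      mul_inv_cancel₀ hNpos.ne']
  have hgeo : ∏ i : Fin N, lam i ^ ((N:ℝ)⁻¹) = 1 := by
    rw [Real.finset_prod_rpow _ _ (fun i _ => hnn i), hprod, Real.one_rpow]
  have amgm := Real.geom_mean_le_arith_mean_weighted Finset.univ (fun _ => (N : ℝ)⁻¹) lam
    (fun i _ => by positivity) hw (fun i _ => hnn i)
  rw [hgeo] at amgm
  have h1 : (1:ℝ) ≤ (N:ℝ)⁻¹ * ∑ i, lam i := by rw [Finset.mul_sum]; exact amgm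
  have := mul_le_mul_of_nonneg_left h1 hNpos.le
  rwa [mul_one, ← mul_assoc, mul_inv_cancel₀ hNpos.ne', one_mul] at this

lemma l2_ineq {ι : Type} [Fintype ι] (u v : EuclideanSpace ℂ ι) (h : ‖v‖ ≤ ‖u‖) :
    ∑ i, ‖u i + v i‖ ^ 2 ≤ 4 * ∑ i, ‖u i‖ ^ 2 := by
  have h1 : ‖u + v‖ ≤ 2 * ‖u‖ := (norm_add_le u v).trans (by linarith)
  have h2 : ‖u + v‖ ^ 2 ≤ 4 * ‖u‖ ^ 2 := by nlinarith [norm_nonneg (u + v), norm_nonneg u]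
  have e1 : ‖u + v‖ ^ 2 = ∑ i, ‖u i + v i‖ ^ 2 := by
    rw [EuclideanSpace.norm_eq, Real.sq_sqrt (by positivity)]
    simp [PiLp.add_apply]
  have e2 : ‖u‖ ^ 2 = ∑ i, ‖u i‖ ^ 2 := by
    rw [EuclideanSpace.norm_eq, Real.sq_sqrt (by positivity)]
  rw [← e1, ← e2]; exact h2

lemma frob_key {N : ℕ} (hN : 0 < N) (B : Matrix (Fin N) (Fin N) ℂ)
    (hdet : ‖B.det‖ = 1) (ε : ℂ) (hε : ‖ε‖ = 1) :
    ∑ p : Fin N × Fin N, ‖(B + ε • 1) p.1 p.2‖ ^ 2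
      ≤ 4 * ∑ p : Fin N × Fin N, ‖B p.1 p.2‖ ^ 2 := by
  classical
  let u : EuclideanSpace ℂ (Fin N × Fin N) :=
    (WithLp.equiv 2 (Fin N × Fin N → ℂ)).symm (fun p => B p.1 p.2)
  let v : EuclideanSpace ℂ (Fin N × Fin N) :=
    (WithLp.equiv 2 (Fin N × Fin N → ℂ)).symm (fun p => if p.1 = p.2 then ε else 0)
  have hu : ∀ p, u p = B p.1 p.2 := fun p => rfl
  have hv : ∀ p : Fin N × Fin N, v p = if p.1 = p.2 then ε else 0 := fun p => rfl
  have hvsq : ∑ p : Fin N × Fin N, ‖v p‖ ^ 2 = (N : ℝ) := by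
    simp only [hv]
    rw [Fintype.sum_prod_type]
    have hrow : ∀ i : Fin N, ∑ j : Fin N, ‖if i = j then ε else (0:ℂ)‖ ^ 2 = 1 := by
      intro i
      rw [Finset.sum_eq_single i (fun b _ hb => by simp [Ne.symm hb]) (by simp)]
      simp [hε]
    simp only [hrow, Finset.sum_const, Finset.card_univ, Fintype.card_fin, nsmul_eq_mul, mul_one]
  have husq : ∑ p : Fin N × Fin N, ‖u p‖ ^ 2 = ∑ p : Fin N × Fin N, ‖B p.1 p.2‖ ^ 2 := rfl
  have hnorm : ‖v‖ ≤ ‖u‖ := by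
    have hv2 : ‖v‖ = Real.sqrt (N : ℝ) := by
      rw [EuclideanSpace.norm_eq, hvsq]
    have hu2 : Real.sqrt (N : ℝ) ≤ ‖u‖ := by
      rw [EuclideanSpace.norm_eq]
      apply Real.sqrt_le_sqrt
      rw [husq]; exact frob_lower hN B hdet
    rw [hv2]; exact hu2
  have := l2_ineq u v hnorm
  rw [husq] at this
  convert this using 2 with p
  congr 1
  rw [hu, hv]
  simp [Matrix.add_apply, Matrix.smul_apply, Matrix.one_apply, mul_ite]

noncomputable def heightIn {ι : Type} [Fintype ι] (K : IntermediateField ℚ Qbar)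
    [FiniteDimensional ℚ K] (x' : ι → K) : ℝ :=
  haveI : CharZero K := charZero_of_injective_algebraMap (algebraMap ℚ K).injective
  haveI : NumberField K := {}
  ((∏ w : InfinitePlace K, (∑ i, (w (x' i)) ^ 2) ^ ((w.mult : ℝ) / 2)) *
      (((FractionalIdeal.absNorm
        (FractionalIdeal.spanFinset (𝓞 K) Finset.univ x') : ℚ) : ℝ))⁻¹) ^
    (((Module.finrank ℚ K : ℝ))⁻¹)

lemma vecHeight_eq_heightIn {ι : Type} [Fintype ι] (x : ι → Qbar)
    {L : IntermediateField ℚ Qbar} [FiniteDimensional ℚ L]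
    (h : IntermediateField.adjoin ℚ (Set.range x) = L) (hx : ∀ i, x i ∈ L) :
    vecHeight x = heightIn L (fun i => ⟨x i, hx i⟩) := by
  subst h; rfl

lemma heightIn_nonneg {ι : Type} [Fintype ι] (K : IntermediateField ℚ Qbar)
    [FiniteDimensional ℚ K] (x : ι → K) : 0 ≤ heightIn K x := by
  haveI : CharZero K := charZero_of_injective_algebraMap (algebraMap ℚ K).injective
  haveI : NumberField K := {}
  unfold heightIn
  apply Real.rpow_nonneg
  apply mul_nonneg
  · exact Finset.prod_nonneg fun w _ => Real.rpow_nonneg (Finset.sum_nonneg fun i _ => sq_nonneg _) _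
  · exact inv_nonneg.mpr (by exact_mod_cast FractionalIdeal.absNorm_nonneg _)

lemma heightIn_le_two_mul {ι : Type} [Fintype ι] (K : IntermediateField ℚ Qbar)
    [FiniteDimensional ℚ K] [NumberField K] (x y : ι → K) (hx : ∃ i, x i ≠ 0)
    (harch : ∀ w : InfinitePlace K, (∑ i, (w (y i)) ^ 2) ≤ 4 * ∑ i, (w (x i)) ^ 2)
    (hspan : FractionalIdeal.spanFinset (𝓞 K) Finset.univ y ≤
      FractionalIdeal.spanFinset (𝓞 K) Finset.univ x) :
    heightIn K y ≤ 2 * heightIn K x := by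
  have hd : 0 < Module.finrank ℚ K := Module.finrank_pos
  set d := Module.finrank ℚ K with hdd
  have hdR : (0:ℝ) < d := by exact_mod_cast hd
  by_cases hy : ∀ i, y i = 0
  · have h0 : heightIn K y = 0 := by
      unfold heightIn
      have : ∀ w : InfinitePlace K, (∑ i, (w (y i)) ^ 2) ^ ((w.mult : ℝ) / 2) = 0 := by
        intro w
        have : ∑ i, (w (y i)) ^ 2 = 0 := by
          apply Finset.sum_eq_zero; intro i _; rw [hy i, map_zero]; ring
        rw [this, Real.zero_rpow]
        have := InfinitePlace.mult_pos (w := w)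
        positivity
      rw [Finset.prod_eq_zero (Finset.mem_univ (Classical.arbitrary _)) (this _), zero_mul,
        Real.zero_rpow (by positivity)]
    rw [h0]
    have := heightIn_nonneg K x
    linarith
  · push_neg at hy
    obtain ⟨iy, hiy⟩ := hy
    obtain ⟨ix, hix⟩ := hx
    unfold heightIn
    set Sx : InfinitePlace K → ℝ := fun w => ∑ i, (w (x i)) ^ 2 with hSx
    set Sy : InfinitePlace K → ℝ := fun w => ∑ i, (w (y i)) ^ 2 with hSy
    have hSxnn : ∀ w, 0 ≤ Sx w := fun w => Finset.sum_nonneg fun i _ => sq_nonneg _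
    have hSynn : ∀ w, 0 ≤ Sy w := fun w => Finset.sum_nonneg fun i _ => sq_nonneg _
    set Px : ℝ := ∏ w : InfinitePlace K, (Sx w) ^ ((w.mult : ℝ) / 2) with hPx
    set Py : ℝ := ∏ w : InfinitePlace K, (Sy w) ^ ((w.mult : ℝ) / 2) with hPy
    have hPxnn : 0 ≤ Px := Finset.prod_nonneg fun w _ => Real.rpow_nonneg (hSxnn w) _
    have hPynn : 0 ≤ Py := Finset.prod_nonneg fun w _ => Real.rpow_nonneg (hSynn w) _
    set Nx : ℝ := ((FractionalIdeal.absNorm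
        (FractionalIdeal.spanFinset (𝓞 K) Finset.univ x) : ℚ) : ℝ) with hNx
    set Ny : ℝ := ((FractionalIdeal.absNorm
        (FractionalIdeal.spanFinset (𝓞 K) Finset.univ y) : ℚ) : ℝ) with hNy
    have hyne : FractionalIdeal.spanFinset (𝓞 K) Finset.univ y ≠ 0 :=
      FractionalIdeal.spanFinset_ne_zero.mpr ⟨iy, Finset.mem_univ _, hiy⟩
    have hxne : FractionalIdeal.spanFinset (𝓞 K) Finset.univ x ≠ 0 :=
      FractionalIdeal.spanFinset_ne_zero.mpr ⟨ix, Finset.mem_univ _, hix⟩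
    have hNxpos : 0 < Nx := by
      rw [hNx]
      have h1 : FractionalIdeal.absNorm (FractionalIdeal.spanFinset (𝓞 K) Finset.univ x) ≠ 0 :=
        fun hh => hxne (FractionalIdeal.absNorm_eq_zero_iff.mp hh)
      have h2 := FractionalIdeal.absNorm_nonneg (FractionalIdeal.spanFinset (𝓞 K) Finset.univ x)
      exact_mod_cast lt_of_le_of_ne h2 (Ne.symm h1)
    have hNxNy : Nx ≤ Ny := by
      rw [hNx, hNy]
      exact_mod_cast absNorm_anti hyne hspan
    have hNypos : 0 < Ny := lt_of_lt_of_le hNxpos hNxNy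
    have harch' : ∀ w : InfinitePlace K, Sy w ≤ 4 * Sx w := fun w => harch w
    clear_value Sx Sy Px Py Nx Ny
    -- archimedean comparison
    have hprod : Py ≤ 2 ^ d * Px := by
      have step1 : ∏ w : InfinitePlace K, (Sy w) ^ ((w.mult : ℝ) / 2)
          ≤ ∏ w : InfinitePlace K, (4 * Sx w) ^ ((w.mult : ℝ) / 2) := by
        apply Finset.prod_le_prod (fun w _ => Real.rpow_nonneg (hSynn w) _)
        intro w _
        exact Real.rpow_le_rpow (hSynn w) (harch' w) (by positivity)
      have step2 : ∀ w : InfinitePlace K,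
          (4 * Sx w) ^ ((w.mult : ℝ) / 2) = 2 ^ w.mult * (Sx w) ^ ((w.mult : ℝ) / 2) := by
        intro w
        rw [Real.mul_rpow (by norm_num) (hSxnn w)]
        congr 1
        rw [show (4:ℝ) = 2 ^ (2:ℕ) by norm_num, ← Real.rpow_natCast 2 2,
          ← Real.rpow_mul (by norm_num), ← Real.rpow_natCast 2 w.mult]
        congr 1
        push_cast; ring
      calc Py = ∏ w : InfinitePlace K, (Sy w) ^ ((w.mult : ℝ) / 2) := hPy
        _ ≤ ∏ w : InfinitePlace K, (4 * Sx w) ^ ((w.mult : ℝ) / 2) := step1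
        _ = ∏ w : InfinitePlace K, 2 ^ w.mult * (Sx w) ^ ((w.mult : ℝ) / 2) := by
            exact Finset.prod_congr rfl fun w _ => step2 w
        _ = (∏ w : InfinitePlace K, (2:ℝ) ^ w.mult) *
              ∏ w : InfinitePlace K, (Sx w) ^ ((w.mult : ℝ) / 2) := Finset.prod_mul_distrib
        _ = 2 ^ d * Px := by
            rw [Finset.prod_pow_eq_pow_sum, InfinitePlace.sum_mult_eq, ← hdd, ← hPx]
    -- combine
    have hbase : Py * Ny⁻¹ ≤ 2 ^ d * (Px * Nx⁻¹) := by
      have h1 : Ny⁻¹ ≤ Nx⁻¹ := by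
        apply inv_anti₀ hNxpos hNxNy
      calc Py * Ny⁻¹ ≤ (2 ^ d * Px) * Nx⁻¹ := by
            apply mul_le_mul hprod h1 (by positivity) (by positivity)
        _ = 2 ^ d * (Px * Nx⁻¹) := by ring
    have h2d : ((2:ℝ) ^ d) ^ ((d : ℝ)⁻¹) = 2 := by
      rw [← Real.rpow_natCast 2 d, ← Real.rpow_mul (by norm_num),
        mul_inv_cancel₀ hdR.ne', Real.rpow_one]
    calc (Py * Ny⁻¹) ^ ((d:ℝ)⁻¹) ≤ (2 ^ d * (Px * Nx⁻¹)) ^ ((d : ℝ)⁻¹) := by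
          exact Real.rpow_le_rpow (by positivity) hbase (by positivity)
      _ = 2 * (Px * Nx⁻¹) ^ ((d:ℝ)⁻¹) := by
          rw [Real.mul_rpow (by positivity) (by positivity), h2d]

lemma key {N : ℕ} (hN : 0 < N) (K : IntermediateField ℚ Qbar) [FiniteDimensional ℚ K]
    [NumberField K] (A' : Matrix (Fin N) (Fin N) K)
    (hdet : A'.det = 1 ∨ A'.det = -1) (ε : K) (hε : ε = 1 ∨ ε = -1) :
    heightIn K (fun p : Fin N × Fin N => A' p.1 p.2 + (if p.1 = p.2 then ε else 0))
      ≤ 2 * heightIn K (fun p : Fin N × Fin N => A' p.1 p.2) := by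
  classical
  haveI : Nonempty (Fin N) := ⟨⟨0, hN⟩⟩
  set x : Fin N × Fin N → K := fun p => A' p.1 p.2 with hx
  set y : Fin N × Fin N → K := fun p => A' p.1 p.2 + (if p.1 = p.2 then ε else 0) with hy
  have hdet0 : A'.det ≠ 0 := by
    rcases hdet with h | h <;> rw [h] <;> simp
  have hxne : ∃ p, x p ≠ 0 := by
    by_contra hc
    push_neg at hc
    have : A' = 0 := by
      ext i j; simpa using hc (i, j)
    rw [this, Matrix.det_zero] at hdet0
    exact hdet0 rfl
  apply heightIn_le_two_mul K x y hxne
  · -- archimedean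
    intro w
    set φ := w.embedding with hφ
    set B : Matrix (Fin N) (Fin N) ℂ := A'.map φ with hB
    have hBdet : ‖B.det‖ = 1 := by
      rw [hB, ← RingHom.mapMatrix_apply, ← RingHom.map_det]
      rcases hdet with h | h <;> rw [h] <;> simp
    have hεn : ‖φ ε‖ = 1 := by
      rcases hε with h | h <;> rw [h] <;> simp
    have := frob_key hN B hBdet (φ ε) hεn
    have ey : ∀ p : Fin N × Fin N, (w (y p))^2 = ‖(B + φ ε • 1) p.1 p.2‖^2 := by
      intro p
      rw [← InfinitePlace.norm_embedding_eq, ← hφ]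
      congr 2
      simp only [hy, map_add, Matrix.add_apply, Matrix.smul_apply, Matrix.one_apply, hB,
        Matrix.map_apply, smul_eq_mul, mul_ite, mul_one, mul_zero]
      congr 1
      split_ifs <;> simp
    have ex : ∀ p : Fin N × Fin N, (w (x p))^2 = ‖B p.1 p.2‖^2 := by
      intro p
      rw [← InfinitePlace.norm_embedding_eq, ← hφ]
      rfl
    rw [Finset.sum_congr rfl (fun p _ => ey p), Finset.sum_congr rfl (fun p _ => ex p)]
    exact this
  · -- non-archimedean
    set I := FractionalIdeal.spanFinset (𝓞 K) Finset.univ x with hI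
    have hxmem : ∀ p : Fin N × Fin N, x p ∈ I := by
      intro p
      rw [hI, ← FractionalIdeal.mem_coe, FractionalIdeal.spanFinset_coe]
      exact Submodule.subset_span ⟨p, Finset.mem_univ p, rfl⟩
    have hdetmem : A'.det ∈ I ^ N := by
      rw [Matrix.det_apply]
      rw [← FractionalIdeal.mem_coe, FractionalIdeal.coe_pow]
      apply Submodule.sum_mem
      intro σ _
      rw [Units.smul_def]
      apply zsmul_mem
      rw [← FractionalIdeal.coe_pow, FractionalIdeal.mem_coe]
      have := prod_mem_pow_card I Finset.univ (fun i => A' (σ i) i)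
        (fun i _ => hxmem (σ i, i))
      rwa [Finset.card_univ, Fintype.card_fin] at this
    have h1mem : (1 : K) ∈ I ^ N := by
      rcases hdet with h | h
      · rwa [h] at hdetmem
      · have : (-(A'.det)) ∈ I ^ N := by
          rw [← FractionalIdeal.mem_coe] at hdetmem ⊢
          exact Submodule.neg_mem _ hdetmem
        rwa [h, neg_neg] at this
    have hone : (1 : FractionalIdeal (𝓞 K)⁰ K) ≤ I := by
      apply one_le_of_one_le_pow hN.ne'
      intro z hz
      have hz1 : z ∈ (1 : FractionalIdeal (𝓞 K)⁰ K) := hz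
      rw [FractionalIdeal.mem_one_iff] at hz1
      obtain ⟨o, rfl⟩ := hz1
      have hfin : algebraMap (𝓞 K) K o ∈ I ^ N := by
        rw [← FractionalIdeal.mem_coe]
        have he : algebraMap (𝓞 K) K o = o • (1:K) := by
          rw [Algebra.smul_def, mul_one]
        rw [he]
        exact Submodule.smul_mem _ o (FractionalIdeal.mem_coe.mpr h1mem)
      exact hfin
    have h1I : (1 : K) ∈ I := hone (FractionalIdeal.one_mem_one _)
    have hεI : ε ∈ I := by
      rcases hε with h | h
      · rwa [h]
      · rw [h, ← FractionalIdeal.mem_coe]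
        exact Submodule.neg_mem _ (FractionalIdeal.mem_coe.mpr h1I)
    have hymem : ∀ p : Fin N × Fin N, y p ∈ I := by
      intro p
      rw [hy, ← FractionalIdeal.mem_coe]
      apply Submodule.add_mem _ (FractionalIdeal.mem_coe.mpr (hxmem p))
      split_ifs
      · exact FractionalIdeal.mem_coe.mpr hεI
      · exact Submodule.zero_mem _
    intro z hz
    have hz0 : z ∈ FractionalIdeal.spanFinset (𝓞 K) Finset.univ y := hz
    have hz' : z ∈ Submodule.span (𝓞 K)
        (y '' ((Finset.univ : Finset (Fin N × Fin N)) : Set (Fin N × Fin N))) := by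
      rw [← FractionalIdeal.mem_coe, FractionalIdeal.spanFinset_coe] at hz0
      exact hz0
    have hfin : z ∈ I := by
      rw [← FractionalIdeal.mem_coe]
      refine Submodule.span_le.mpr ?_ hz'
      rintro _ ⟨p, _, rfl⟩
      exact FractionalIdeal.mem_coe.mpr (hymem p)
    exact hfin

lemma vecHeight_nonneg {ι : Type} [Fintype ι] (x : ι → Qbar) : 0 ≤ vecHeight x := by
  haveI : Finite (Set.range x) := Set.finite_range x
  haveI : FiniteDimensional ℚ (IntermediateField.adjoin ℚ (Set.range x)) :=
    IntermediateField.finiteDimensional_adjoin fun a _ =>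
      ((AlgebraicClosure.isAlgebraic ℚ).isAlgebraic a).isIntegral
  rw [vecHeight_eq_heightIn x rfl (fun i => IntermediateField.subset_adjoin ℚ _ ⟨i, rfl⟩)]
  exact heightIn_nonneg _ _

lemma main_half {N : ℕ} (A : Matrix (Fin N) (Fin N) Qbar)
    (hdet : A.det = 1 ∨ A.det = -1) (ε : Qbar) (hε : ε = 1 ∨ ε = -1) :
    entHeight (A + ε • 1) ≤ 2 * entHeight A := by
  classical
  rcases Nat.eq_zero_or_pos N with hN | hN
  · subst hN
    have he : entHeight (A + ε • 1) = entHeight A := by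
      unfold entHeight
      congr 1
      funext p
      exact absurd p.1.2 (by omega)
    rw [he]
    have h0 : 0 ≤ entHeight A := vecHeight_nonneg _
    linarith
  · set x : Fin N × Fin N → Qbar := fun p => A p.1 p.2 with hx
    set L := IntermediateField.adjoin ℚ (Set.range x) with hL
    haveI : Finite (Set.range x) := Set.finite_range x
    haveI : FiniteDimensional ℚ L :=
      IntermediateField.finiteDimensional_adjoin fun a _ =>
        ((AlgebraicClosure.isAlgebraic ℚ).isAlgebraic a).isIntegral
    haveI : CharZero L := charZero_of_injective_algebraMap (algebraMap ℚ L).injective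
    haveI : NumberField L := {}
    have hmemx : ∀ p : Fin N × Fin N, x p ∈ L :=
      fun p => IntermediateField.subset_adjoin ℚ _ ⟨p, rfl⟩
    have hεL : ε ∈ L := by
      rcases hε with h | h
      · rw [h]; exact one_mem L
      · rw [h]; exact neg_mem (one_mem L)
    set y : Fin N × Fin N → Qbar := fun p => x p + (if p.1 = p.2 then ε else 0) with hy
    have hyent : (fun p : Fin N × Fin N => (A + ε • 1) p.1 p.2) = y := by
      funext p
      simp only [hy, hx, Matrix.add_apply, Matrix.smul_apply, Matrix.one_apply, smul_eq_mul,
        mul_ite, mul_one, mul_zero]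
    have hmemy : ∀ p : Fin N × Fin N, y p ∈ L := by
      intro p
      apply add_mem (hmemx p)
      split_ifs
      · exact hεL
      · exact zero_mem L
    have hadj : IntermediateField.adjoin ℚ (Set.range y) = L := by
      apply le_antisymm
      · rw [IntermediateField.adjoin_le_iff]
        rintro _ ⟨p, rfl⟩
        exact hmemy p
      · rw [hL, IntermediateField.adjoin_le_iff]
        rintro _ ⟨p, rfl⟩
        have h1 : y p ∈ IntermediateField.adjoin ℚ (Set.range y) :=
          IntermediateField.subset_adjoin ℚ _ ⟨p, rfl⟩
        have h2 : (if p.1 = p.2 then ε else 0) ∈ IntermediateField.adjoin ℚ (Set.range y) := by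
          split_ifs
          · rcases hε with h | h
            · rw [h]; exact one_mem _
            · rw [h]; exact neg_mem (one_mem _)
          · exact zero_mem _
        have := sub_mem h1 h2
        simpa [hy] using this
    have e1 : entHeight (A + ε • 1) = heightIn L (fun p => ⟨y p, hmemy p⟩) := by
      unfold entHeight
      rw [hyent]
      exact vecHeight_eq_heightIn y hadj hmemy
    have e2 : entHeight A = heightIn L (fun p => ⟨x p, hmemx p⟩) :=
      vecHeight_eq_heightIn x rfl hmemx
    rw [e1, e2]
    -- set up the matrix over L
    set A' : Matrix (Fin N) (Fin N) L := Matrix.of (fun i j => (⟨A i j, hmemx (i, j)⟩ : L))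
      with hA'
    have hdet' : A'.det = 1 ∨ A'.det = -1 := by
      have hmap : A'.map (algebraMap L Qbar) = A := by
        ext i j; rfl
      have hd : (algebraMap L Qbar) A'.det = A.det := by
        rw [← hmap, ← RingHom.mapMatrix_apply, ← RingHom.map_det]
      have hinj : Function.Injective (algebraMap L Qbar) := (algebraMap L Qbar).injective
      rcases hdet with h | h
      · left; apply hinj; rw [hd, h, _root_.map_one]
      · right; apply hinj; rw [hd, h, map_neg, _root_.map_one]
    set ε' : L := ⟨ε, hεL⟩ with hε'
    have hε'1 : ε' = 1 ∨ ε' = -1 := by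
      rcases hε with h | h
      · left; exact Subtype.ext h
      · right; exact Subtype.ext h
    have ex : (fun p : Fin N × Fin N => (⟨x p, hmemx p⟩ : L)) =
        (fun p : Fin N × Fin N => A' p.1 p.2) := rfl
    have ey : (fun p : Fin N × Fin N => (⟨y p, hmemy p⟩ : L)) =
        (fun p : Fin N × Fin N => A' p.1 p.2 + (if p.1 = p.2 then ε' else 0)) := by
      funext p
      apply Subtype.ext
      show y p = ((A' p.1 p.2 + (if p.1 = p.2 then ε' else 0) : L) : Qbar)
      rw [hy]
      push_cast
      congr 1
      split_ifs <;> simp [hε']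
    rw [ex, ey]
    exact key hN L A' hdet' ε' hε'1

/-- Lemma 6.5: if `A ∈ GL_N(Qbar)` has determinant `±1`, then
`𝓗(A ± I_N) ≤ 2 𝓗(A)`. -/
theorem height_add_identity (N : ℕ) (A : Matrix (Fin N) (Fin N) Qbar)
    (hdet : A.det = 1 ∨ A.det = -1) :
    entHeight (A + 1) ≤ 2 * entHeight A ∧ entHeight (A - 1) ≤ 2 * entHeight A := by
  constructor
  · have h := main_half A hdet 1 (Or.inl rfl)
    rwa [one_smul] at h
  · have h := main_half A hdet (-1) (Or.inr rfl)
    rwa [neg_smul, one_smul, ← sub_eq_add_neg] at h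

end
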